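/- Let A and B be groups, let B act transitively on a set I, and let W be a wreath-like product of A and B corresponding to this action, with canonical homomorphism ε: W → B. Let D ≤ B be a subgroup whose induced action on I is free, let V = ε⁻¹(D) be the full preimage of D in W, and let O denote the set of D-orbits in I. Then V is a regular wreath-like product of C and D, where C is the direct sum of |O|-many isomorphic copies of A. -/

import Mathlib

/-- `W` is a wreath-like product of `A` and `B` corresponding to the action of `B` on `I`
(written `W ∈ WR(A, B ↷ I)`): it comes with a family of subgroups `𝒜 i`, each isomorphic
to `A`, which pairwise commute elementwise, form an independent family, and generate the
kernel of the surjective canonical homomorphism `ε : W → B` (so their internal direct sum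
is the base `ker ε`), and conjugation by `w ∈ W` carries `𝒜 i` onto `𝒜 (ε w • i)`.
A regular wreath-like product of `A` and `B` is the case `I = B` with the left
translation action of `B` on itself. -/
structure IsWreathLikeProduct (W A B I : Type*) [Group W] [Group A] [Group B]
    [MulAction B I] (𝒜 : I → Subgroup W) (ε : W →* B) : Prop where
  surjective : Function.Surjective ε
  isoA : ∀ i : I, Nonempty (𝒜 i ≃* A)
  commute : ∀ i j : I, i ≠ j → ∀ x ∈ 𝒜 i, ∀ y ∈ 𝒜 j, Commute x y
  indep : ∀ i : I, Disjoint (𝒜 i) (⨆ (j : I) (_ : j ≠ i), 𝒜 j)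
  base_eq : (⨆ i : I, 𝒜 i) = ε.ker
  conj_eq : ∀ (w : W) (i : I),
    Subgroup.map (MulAut.conj w).toMonoidHom (𝒜 i) = 𝒜 (ε w • i)

/-- The direct sum of `B`-many copies of the group `A`: the subgroup of the product group
`B → A` consisting of the finitely supported functions. -/
def FinSuppFun (B A : Type*) [Group A] : Subgroup (B → A) where
  carrier := {f | (Function.mulSupport f).Finite}
  one_mem' := by simp [Function.mulSupport_one]
  mul_mem' := by
    intro f g hf hg
    exact (Set.Finite.union hf hg).subset (Function.mulSupport_mul f g)
  inv_mem' := by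
    intro f hf
    simpa [Function.mulSupport_inv] using hf

open Function

section BigProd

variable {G A ι : Type*} [Group G] [Group A]

lemma mem_finSuppFun {f : ι → A} : f ∈ FinSuppFun ι A ↔ (mulSupport f).Finite := Iff.rfl

variable (ψ : ι → (A →* G))
  (hcomm : ∀ i j : ι, i ≠ j → ∀ a b : A, Commute (ψ i a) (ψ j b))

lemma bp_pairwise (hcomm : ∀ i j : ι, i ≠ j → ∀ a b : A, Commute (ψ i a) (ψ j b))
    (f : ι → A) (s : Set ι) :
    s.Pairwise (Commute on fun i => ψ i (f i)) :=
  fun i _ j _ hij => hcomm i j hij _ _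

lemma bp_eq_aux (f : ι → A) (s t : Finset ι) (hst : s ⊆ t)
    (h1 : ∀ i ∈ t, i ∉ s → f i = 1) :
    t.noncommProd (fun i => ψ i (f i)) (bp_pairwise ψ hcomm f _) =
    s.noncommProd (fun i => ψ i (f i)) (bp_pairwise ψ hcomm f _) := by
  classical
  have hu : s ∪ (t \ s) = t := Finset.union_sdiff_of_subset hst
  have e : t.noncommProd (fun i => ψ i (f i)) (bp_pairwise ψ hcomm f _) =
      (s ∪ (t \ s)).noncommProd (fun i => ψ i (f i)) (bp_pairwise ψ hcomm f _) :=
    Finset.noncommProd_congr hu.symm (fun x _ => rfl) _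
  rw [e,
    Finset.noncommProd_union_of_disjoint Finset.disjoint_sdiff _]
  have hone : ∀ hp, (t \ s).noncommProd (fun i => ψ i (f i)) hp = 1 := by
    intro hp
    rw [Finset.noncommProd_eq_pow_card _ _ _ 1 ?_, one_pow]
    intro x hx
    rw [Finset.mem_sdiff] at hx
    rw [h1 x hx.1 hx.2, map_one]
  rw [hone, mul_one]

noncomputable def bigProdFun (f : ↥(FinSuppFun ι A)) : G :=
  (mem_finSuppFun.mp f.2).toFinset.noncommProd (fun i => ψ i ((f : ι → A) i))
    (bp_pairwise ψ hcomm _ _)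

lemma bigProdFun_eq (f : ↥(FinSuppFun ι A)) (s : Finset ι)
    (hs : ∀ i, (f : ι → A) i ≠ 1 → i ∈ s) :
    bigProdFun ψ hcomm f =
      s.noncommProd (fun i => ψ i ((f : ι → A) i)) (bp_pairwise ψ hcomm _ _) := by
  classical
  have hfin := mem_finSuppFun.mp f.2
  have h1 : hfin.toFinset ⊆ hfin.toFinset ∪ s := Finset.subset_union_left
  have h2 : s ⊆ hfin.toFinset ∪ s := Finset.subset_union_right
  have e1 := bp_eq_aux ψ hcomm (f : ι → A) hfin.toFinset (hfin.toFinset ∪ s) h1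
    (fun i _ hi => by simpa [Set.Finite.mem_toFinset, mem_mulSupport, not_not] using hi)
  have e2 := bp_eq_aux ψ hcomm (f : ι → A) s (hfin.toFinset ∪ s) h2
    (fun i _ hi => by by_contra h; exact hi (hs i h))
  rw [bigProdFun, ← e1, e2]

noncomputable def bigProd : ↥(FinSuppFun ι A) →* G where
  toFun := bigProdFun ψ hcomm
  map_one' := by
    rw [bigProdFun_eq ψ hcomm 1 ∅ (fun i hi => absurd rfl hi)]
    exact Finset.noncommProd_empty _ _
  map_mul' f g := by
    classical
    show bigProdFun ψ hcomm (f * g) = bigProdFun ψ hcomm f * bigProdFun ψ hcomm g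
    have hf := mem_finSuppFun.mp f.2
    have hg := mem_finSuppFun.mp g.2
    set s : Finset ι := hf.toFinset ∪ hg.toFinset with hs
    have hmemf : ∀ i, (f : ι → A) i ≠ 1 → i ∈ s := fun i hi =>
      Finset.mem_union_left _ (by simpa [Set.Finite.mem_toFinset, mem_mulSupport] using hi)
    have hmemg : ∀ i, (g : ι → A) i ≠ 1 → i ∈ s := fun i hi =>
      Finset.mem_union_right _ (by simpa [Set.Finite.mem_toFinset, mem_mulSupport] using hi)
    have hmemfg : ∀ i, ((f * g : ↥(FinSuppFun ι A)) : ι → A) i ≠ 1 → i ∈ s := by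
      intro i hi
      by_cases h : (f : ι → A) i = 1
      · refine hmemg i fun h' => hi ?_
        simp [h, h']
      · exact hmemf i h
    rw [bigProdFun_eq ψ hcomm _ s hmemfg, bigProdFun_eq ψ hcomm f s hmemf,
      bigProdFun_eq ψ hcomm g s hmemg]
    rw [← Finset.noncommProd_mul_distrib (fun i => ψ i ((f : ι → A) i))
      (fun i => ψ i ((g : ι → A) i)) (bp_pairwise ψ hcomm _ _) (bp_pairwise ψ hcomm _ _)
      (fun i _ j _ hij => hcomm i j hij _ _)]
    exact Finset.noncommProd_congr rfl (fun x _ => by simp) _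

lemma bigProd_apply (f : ↥(FinSuppFun ι A)) (s : Finset ι)
    (hs : ∀ i, (f : ι → A) i ≠ 1 → i ∈ s) :
    bigProd ψ hcomm f =
      s.noncommProd (fun i => ψ i ((f : ι → A) i)) (bp_pairwise ψ hcomm _ _) :=
  bigProdFun_eq ψ hcomm f s hs

open Classical in
noncomputable def fsingle (i : ι) (a : A) : ↥(FinSuppFun ι A) :=
  ⟨fun j => if j = i then a else 1, by
    apply Set.Finite.subset (Set.finite_singleton i)
    intro j hj
    rw [mem_mulSupport] at hj
    by_contra h
    exact hj (if_neg (by simpa using h))⟩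

open Classical in
lemma fsingle_apply_self (i : ι) (a : A) : (fsingle i a : ι → A) i = a := if_pos rfl

open Classical in
lemma fsingle_apply_ne (i j : ι) (a : A) (h : j ≠ i) :
    (fsingle i a : ι → A) j = 1 := if_neg h

lemma bigProd_fsingle (i : ι) (a : A) : bigProd ψ hcomm (fsingle i a) = ψ i a := by
  classical
  rw [bigProd_apply ψ hcomm _ {i} (fun j hj => by
    by_contra h
    exact hj (fsingle_apply_ne i j a (by simpa using h)))]
  rw [Finset.noncommProd_singleton, fsingle_apply_self]

lemma bigProd_mem (S : Set ι) (f : ↥(FinSuppFun ι A))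
    (hf : ∀ i, (f : ι → A) i ≠ 1 → i ∈ S) :
    bigProd ψ hcomm f ∈ ⨆ i ∈ S, (ψ i).range := by
  show bigProdFun ψ hcomm f ∈ _
  rw [bigProdFun]
  apply Subgroup.noncommProd_mem
  intro i hi
  rw [Set.Finite.mem_toFinset, mem_mulSupport] at hi
  have hle : (ψ i).range ≤ ⨆ i ∈ S, (ψ i).range :=
    le_iSup₂ (f := fun i (_ : i ∈ S) => (ψ i).range) i (hf i hi)
  exact hle ⟨_, rfl⟩

lemma bigProd_injective (hinj : ∀ i, Function.Injective (ψ i))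
    (hind : iSupIndep fun i => (ψ i).range) :
    Function.Injective (bigProd ψ hcomm) := by
  rw [injective_iff_map_eq_one]
  intro f hf1
  have hfin := mem_finSuppFun.mp f.2
  have key := Subgroup.eq_one_of_noncommProd_eq_one_of_iSupIndep hfin.toFinset
    (fun i => ψ i ((f : ι → A) i)) (bp_pairwise ψ hcomm _ _)
    (fun i => (ψ i).range) hind (fun i _ => ⟨_, rfl⟩) hf1
  apply Subtype.ext
  rw [OneMemClass.coe_one]
  funext i
  rw [Pi.one_apply]
  by_cases hi : (f : ι → A) i = 1
  · exact hi
  · have h2 : ψ i ((f : ι → A) i) = 1 := key i (by rwa [Set.Finite.mem_toFinset, mem_mulSupport])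
    apply hinj i
    rw [h2, map_one]

lemma exists_bigProd_eq (S : Set ι) (x : G) (hx : x ∈ ⨆ i ∈ S, (ψ i).range) :
    ∃ f : ↥(FinSuppFun ι A), (∀ i, (f : ι → A) i ≠ 1 → i ∈ S) ∧ bigProd ψ hcomm f = x := by
  let T : Subgroup ↥(FinSuppFun ι A) :=
    { carrier := {f | ∀ i, (f : ι → A) i ≠ 1 → i ∈ S}
      one_mem' := fun i hi => absurd rfl hi
      mul_mem' := by
        intro f g hf hg i hi
        by_cases h : (f : ι → A) i = 1
        · refine hg i fun h' => hi ?_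
          simp [h, h']
        · exact hf i h
      inv_mem' := by
        intro f hf i hi
        refine hf i fun h => hi ?_
        simp [h] }
  have hle : (⨆ i ∈ S, (ψ i).range) ≤ Subgroup.map (bigProd ψ hcomm) T := by
    refine iSup₂_le fun i hi => ?_
    rintro x ⟨a, rfl⟩
    refine ⟨fsingle i a, ?_, bigProd_fsingle ψ hcomm i a⟩
    intro j hj
    rcases eq_or_ne j i with rfl | h
    · exact hi
    · exact absurd (fsingle_apply_ne i j a h) hj
  obtain ⟨f, hfT, rfl⟩ := hle hx
  exact ⟨f, hfT, rfl⟩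

include hcomm in
lemma bigProd_disjoint (hinj : ∀ i, Function.Injective (ψ i))
    (hind : iSupIndep fun i => (ψ i).range) (S T : Set ι) (hST : Disjoint S T) :
    Disjoint (⨆ i ∈ S, (ψ i).range) (⨆ i ∈ T, (ψ i).range) := by
  rw [Subgroup.disjoint_def]
  intro x hxS hxT
  obtain ⟨f, hf, rfl⟩ := exists_bigProd_eq ψ hcomm S x hxS
  obtain ⟨g, hg, hgx⟩ := exists_bigProd_eq ψ hcomm T _ hxT
  have hfg : g = f := bigProd_injective ψ hcomm hinj hind hgx
  have hf1 : f = 1 := by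
    apply Subtype.ext
    funext i
    by_contra h
    exact Set.disjoint_left.mp hST (hf i h) (hg i (by rwa [hfg]))
  rw [hf1, map_one]

lemma bigProd_range : (bigProd ψ hcomm).range = ⨆ i, (ψ i).range := by
  apply le_antisymm
  · rintro x ⟨f, rfl⟩
    have := bigProd_mem ψ hcomm Set.univ f (fun i _ => Set.mem_univ i)
    simpa using this
  · refine iSup_le fun i => ?_
    rintro x ⟨a, rfl⟩
    exact ⟨fsingle i a, bigProd_fsingle ψ hcomm i a⟩

end BigProd

/-- Let `B` act transitively on `I`, let `W ∈ WR(A, B ↷ I)` with canonical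
homomorphism `ε`, let `D ≤ B` be a subgroup whose induced action on `I` is free, and let
`V = ε⁻¹(D)`. Then `V` is a regular wreath-like product of `C` and `D`, where `C` is the
direct sum of copies of `A` indexed by the set `O` of `D`-orbits in `I`. -/
theorem wreathLike_preimage_of_free_subgroup
    {W A B I : Type*} [Group W] [Group A] [Group B] [MulAction B I]
    (htrans : MulAction.IsPretransitive B I)
    (𝒜 : I → Subgroup W) (ε : W →* B)
    (hW : IsWreathLikeProduct W A B I 𝒜 ε)
    (D : Subgroup B)
    (hfree : ∀ (d : D) (i : I), d • i = i → d = 1) :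
    ∃ (ℬ : D → Subgroup (Subgroup.comap ε D)) (ε' : Subgroup.comap ε D →* D),
      IsWreathLikeProduct (Subgroup.comap ε D)
        (FinSuppFun (MulAction.orbitRel.Quotient D I) A) D D ℬ ε' := by
  classical
  set V := Subgroup.comap ε D with hV
  set O := MulAction.orbitRel.Quotient D I with hO
  -- basic inclusions
  have hAker : ∀ i, 𝒜 i ≤ ε.ker := fun i => hW.base_eq ▸ le_iSup 𝒜 i
  have hkerV : ε.ker ≤ V := by
    intro x hx
    rw [MonoidHom.mem_ker] at hx
    rw [hV, Subgroup.mem_comap, hx]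
    exact one_mem D
  have hAV : ∀ i, 𝒜 i ≤ V := fun i => (hAker i).trans hkerV
  -- the restricted quotient map
  let ε' : V →* D := MonoidHom.codRestrict (ε.comp V.subtype) D (fun v => v.2)
  have hε'coe : ∀ x : V, (ε' x : B) = ε ↑x := fun x => rfl
  -- the indexing
  let emb : D → O → I := fun d o => (d : B) • o.out
  have horb : ∀ i : I, ∃ d : D, emb d (Quotient.mk'' i) = i := by
    intro i
    have h1 : (Quotient.mk'' i : O) = Quotient.mk'' ((Quotient.mk'' i : O).out) :=
      (Quotient.out_eq' _).symm
    have h2 := Quotient.exact' h1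
    rw [MulAction.orbitRel_apply, MulAction.mem_orbit_iff] at h2
    obtain ⟨d, hd⟩ := h2
    exact ⟨d, by show (d : B) • _ = i; rw [← Subgroup.smul_def]; exact hd⟩
  have hemb_inj : ∀ (d d' : D) (o o' : O), emb d o = emb d' o' → d = d' ∧ o = o' := by
    intro d d' o o' h
    have h' : (d : B) • o.out = (d' : B) • o'.out := h
    have ho : o = o' := by
      have : ((d'⁻¹ * d : D) : B) • o.out = o'.out := by
        rw [Subgroup.coe_mul, mul_smul, h', Subgroup.coe_inv, inv_smul_smul]
      have hrel : o'.out ∈ MulAction.orbit D o.out :=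
        ⟨d'⁻¹ * d, by show (d'⁻¹ * d : D) • _ = _; rw [Subgroup.smul_def]; exact this⟩
      have : (Quotient.mk'' o'.out : O) = Quotient.mk'' o.out :=
        Quotient.sound' ((MulAction.orbitRel_apply (G := D)).mpr hrel)
      rw [Quotient.out_eq', Quotient.out_eq'] at this
      exact this.symm
    subst ho
    refine ⟨?_, rfl⟩
    have : ((d'⁻¹ * d : D) : B) • o.out = o.out := by
      rw [Subgroup.coe_mul, mul_smul, h', Subgroup.coe_inv, inv_smul_smul]
    have h1 : (d'⁻¹ * d : D) = 1 :=
      hfree (d'⁻¹ * d) o.out (by rw [Subgroup.smul_def]; exact this)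
    exact (inv_mul_eq_one.mp h1).symm
  -- the injections A →* W
  let e : ∀ i, 𝒜 i ≃* A := fun i => (hW.isoA i).some
  let ψ : ∀ i, A →* W := fun i => (𝒜 i).subtype.comp (e i).symm.toMonoidHom
  have hψmem : ∀ i a, ψ i a ∈ 𝒜 i := fun i a => ((e i).symm a).2
  have hψinj : ∀ i, Function.Injective (ψ i) := fun i =>
    (Subgroup.subtype_injective _).comp (e i).symm.injective
  have hψrange : ∀ i, (ψ i).range = 𝒜 i := by
    intro i
    apply le_antisymm
    · rintro x ⟨a, rfl⟩
      exact hψmem i a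
    · intro x hx
      exact ⟨e i ⟨x, hx⟩, by simp [ψ]⟩
  have hcommG : ∀ i j, i ≠ j → ∀ a b, Commute (ψ i a) (ψ j b) := fun i j h a b =>
    hW.commute i j h _ (hψmem i a) _ (hψmem j b)
  have hindG : iSupIndep fun i => (ψ i).range := by
    have he : (fun i => (ψ i).range) = 𝒜 := funext hψrange
    rw [he]
    exact hW.indep
  -- the base subgroups
  let R : D → Subgroup W := fun d => ⨆ o : O, 𝒜 (emb d o)
  have hRV : ∀ d, R d ≤ V := fun d => iSup_le fun o => hAV _
  have hRker : ∀ d, R d ≤ ε.ker := fun d => iSup_le fun o => hAker _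
  let ℬ : D → Subgroup V := fun d => (R d).subgroupOf V
  have hmapℬ : ∀ d, (ℬ d).map V.subtype = R d := fun d => by
    rw [Subgroup.subgroupOf_map_subtype]
    exact inf_of_le_left (hRV d)
  -- per-slice data
  have hembne : ∀ (d : D) (o o' : O), o ≠ o' → emb d o ≠ emb d o' :=
    fun d o o' h he => h (hemb_inj d d o o' he).2
  have hcommd : ∀ d : D, ∀ o o' : O, o ≠ o' → ∀ a b : A,
      Commute (ψ (emb d o) a) (ψ (emb d o') b) :=
    fun d o o' h a b => hcommG _ _ (hembne d o o' h) a b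
  have hindd : ∀ d : D, iSupIndep fun o : O => (ψ (emb d o)).range := by
    intro d o
    simp only [hψrange]
    refine (hW.indep (emb d o)).mono_right ?_
    refine iSup₂_le fun o' ho' => ?_
    exact le_iSup₂ (f := fun j (_ : j ≠ emb d o) => 𝒜 j) (emb d o')
      (fun he => ho' (hemb_inj d d o' o he).2)
  let Φ : ∀ d : D, ↥(FinSuppFun O A) →* W := fun d =>
    bigProd (fun o => ψ (emb d o)) (hcommd d)
  have hΦinj : ∀ d, Function.Injective (Φ d) := fun d =>
    bigProd_injective _ (hcommd d) (fun o => hψinj _) (hindd d)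
  have hΦrange : ∀ d, (Φ d).range = R d := by
    intro d
    rw [show Φ d = bigProd (fun o => ψ (emb d o)) (hcommd d) from rfl, bigProd_range]
    exact iSup_congr fun o => hψrange _
  refine ⟨ℬ, ε', ?_⟩
  constructor
  -- surjectivity
  · intro d
    obtain ⟨w, hw⟩ := hW.surjective ↑d
    refine ⟨⟨w, by rw [hV, Subgroup.mem_comap, hw]; exact d.2⟩, ?_⟩
    exact Subtype.ext hw
  -- isoA
  · intro d
    exact ⟨(Subgroup.subgroupOfEquivOfLe (hRV d)).trans
      ((MulEquiv.subgroupCongr (hΦrange d).symm).trans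
        (MonoidHom.ofInjective (hΦinj d)).symm)⟩
  -- commute
  · have hcommR : ∀ d d' : D, d ≠ d' → ∀ a ∈ R d, ∀ b ∈ R d', Commute a b := by
      intro d d' hne a ha b hb
      have step1 : ∀ o : O, R d' ≤ Subgroup.centralizer (𝒜 (emb d o)) := by
        intro o
        refine iSup_le fun o' => ?_
        intro y hy
        rw [Subgroup.mem_centralizer_iff]
        intro x hx
        exact hW.commute (emb d o) (emb d' o')
          (fun he => hne (hemb_inj d d' o o' he).1) x hx y hy
      have step2 : R d ≤ Subgroup.centralizer {b} := by
        refine iSup_le fun o => ?_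
        intro x hx
        rw [Subgroup.mem_centralizer_iff]
        rintro g (rfl : g = b)
        exact ((Subgroup.mem_centralizer_iff.mp (step1 o hb)) x hx).symm
      have := Subgroup.mem_centralizer_iff.mp (step2 ha) b rfl
      exact this.symm
    intro d d' hne x hx y hy
    have hx' : (x : W) ∈ R d := Subgroup.mem_subgroupOf.mp hx
    have hy' : (y : W) ∈ R d' := Subgroup.mem_subgroupOf.mp hy
    have h := hcommR d d' hne _ hx' _ hy'
    exact Subtype.ext (by rw [Subgroup.coe_mul, Subgroup.coe_mul]; exact h)
  -- indep
  · intro d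
    set S : Set I := Set.range (emb d) with hS
    set T : Set I := {i | ∃ d' : D, d' ≠ d ∧ ∃ o : O, emb d' o = i} with hT
    have hST : Disjoint S T := by
      rw [Set.disjoint_left]
      rintro i ⟨o, rfl⟩ ⟨d', hd', o', he⟩
      exact hd' (hemb_inj d' d o' o he).1
    have hdisj := bigProd_disjoint ψ hcommG hψinj hindG S T hST
    simp only [hψrange] at hdisj
    rw [Subgroup.disjoint_def]
    intro x hx1 hx2
    have hle1 : R d ≤ ⨆ i ∈ S, 𝒜 i := by
      refine iSup_le fun o => ?_
      exact le_iSup₂ (f := fun i (_ : i ∈ S) => 𝒜 i) (emb d o) ⟨o, rfl⟩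
    have hle2 : (⨆ (d' : D) (_ : d' ≠ d), ℬ d') ≤ (⨆ i ∈ T, 𝒜 i).subgroupOf V := by
      refine iSup₂_le fun d' hd' => ?_
      refine Subgroup.comap_mono ?_
      refine iSup_le fun o => ?_
      exact le_iSup₂ (f := fun i (_ : i ∈ T) => 𝒜 i) (emb d' o) ⟨d', hd', o, rfl⟩
    have h1 : (x : W) ∈ ⨆ i ∈ S, 𝒜 i := hle1 (Subgroup.mem_subgroupOf.mp hx1)
    have h2 : (x : W) ∈ ⨆ i ∈ T, 𝒜 i := Subgroup.mem_subgroupOf.mp (hle2 hx2)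
    have := Subgroup.disjoint_def.mp hdisj h1 h2
    exact Subtype.ext (by rw [this]; rfl)
  -- base_eq
  · apply Subgroup.map_injective (Subgroup.subtype_injective V)
    rw [Subgroup.map_iSup]
    have h1 : ∀ d : D, (ℬ d).map V.subtype = R d := hmapℬ
    simp only [h1]
    have hker' : ε'.ker.map V.subtype = ε.ker := by
      ext w
      constructor
      · rintro ⟨x, hx, rfl⟩
        rw [SetLike.mem_coe, MonoidHom.mem_ker] at hx
        rw [MonoidHom.mem_ker]
        have := congrArg (Subtype.val) hx
        rw [hε'coe] at this
        exact this
      · intro hw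
        refine ⟨⟨w, hkerV hw⟩, ?_, rfl⟩
        rw [SetLike.mem_coe, MonoidHom.mem_ker]
        apply Subtype.ext
        rw [hε'coe]
        exact hw
    rw [hker']
    apply le_antisymm
    · exact iSup_le fun d => hRker d
    · rw [← hW.base_eq]
      refine iSup_le fun i => ?_
      obtain ⟨d, hd⟩ := horb i
      calc 𝒜 i = 𝒜 (emb d (Quotient.mk'' i)) := by rw [hd]
        _ ≤ R d := le_iSup (fun o => 𝒜 (emb d o)) (Quotient.mk'' i)
        _ ≤ ⨆ d : D, R d := le_iSup R d
  -- conj_eq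
  · intro v d
    apply Subgroup.map_injective (Subgroup.subtype_injective V)
    have hcomp : V.subtype.comp (MulAut.conj v).toMonoidHom =
        ((MulAut.conj (v : W)).toMonoidHom).comp V.subtype := by
      ext x
      simp [Subgroup.coe_mul]
    rw [Subgroup.map_map, hcomp, ← Subgroup.map_map, hmapℬ d, hmapℬ (ε' v • d)]
    show Subgroup.map (MulAut.conj (v : W)).toMonoidHom (⨆ o : O, 𝒜 (emb d o)) = _
    rw [Subgroup.map_iSup]
    refine iSup_congr fun o => ?_
    rw [hW.conj_eq]
    congr 1
    show ε ↑v • ((d : B) • o.out) = ((ε' v • d : D) : B) • o.out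
    rw [smul_smul, smul_eq_mul, Subgroup.coe_mul, hε'coe]
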